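/- Let m00, m10, m20, m01, m11, m21 be nonnegative integers with m1+ = m10+m11, and let a0, a1 > 0. Then the quadruple integral over (0,1)⁴ of 2^{m1+} · γ0^{m10}(1-γ0)^{m20}/(1+γ0)^{m10+m20} · γ1^{m11}(1-γ1)^{m21}/(1+γ1)^{m11+m21} · u^{m10+m20}(1-u)^{m00} · v^{m11+m21}(1-v)^{m01} times the prior π(γ0,γ1,u,v) = [2^{1/2}γ0^{-1/2}(1-γ0)^{-1/2}/(B(1/2,1/2)(1+γ0))] · [2^{1/2}γ1^{-1/2}(1-γ1)^{-1/2}/(B(1/2,1/2)(1+γ1))] · [u^{a0-1}(1-u)^{-1/2}/B(a0,1/2)] · [v^{a1-1}(1-v)^{-1/2}/B(a1,1/2)] dγ0 dγ1 du dv equals [B(m10+1/2, m20+1/2)/B(1/2,1/2)] · [B(m11+1/2, m21+1/2)/B(1/2,1/2)] · [B(m10+m20+a0, m00+1/2)/B(a0,1/2)] · [B(m11+m21+a1, m01+1/2)/B(a1,1/2)]. (This is the marginal predictive distribution of the data under Dallal's saturated model H*1: γ0 ≠ γ1, up to the multinomial coefficients.) -/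

import Mathlib

open MeasureTheory

/-- The Beta function `B(a,b) = Γ(a)Γ(b)/Γ(a+b)`. -/
noncomputable def betaFn (a b : ℝ) : ℝ := Real.Gamma a * Real.Gamma b / Real.Gamma (a + b)

lemma betaFn_pos {a b : ℝ} (ha : 0 < a) (hb : 0 < b) : 0 < betaFn a b := by
  unfold betaFn
  have := Real.Gamma_pos_of_pos ha
  have := Real.Gamma_pos_of_pos hb
  have := Real.Gamma_pos_of_pos (by linarith : (0:ℝ) < a + b)
  positivity

lemma integral_beta {a b : ℝ} (ha : 0 < a) (hb : 0 < b) :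
    ∫ x in Set.Ioo (0:ℝ) 1, x ^ (a-1) * (1-x) ^ (b-1) = betaFn a b := by
  have h1 : Complex.betaIntegral a b
      = ((∫ x in (0:ℝ)..1, x ^ (a-1) * (1-x) ^ (b-1)) : ℝ) := by
    rw [Complex.betaIntegral, ← intervalIntegral.integral_ofReal]
    apply intervalIntegral.integral_congr
    intro x hx
    rw [Set.uIcc_of_le (by norm_num : (0:ℝ) ≤ 1)] at hx
    obtain ⟨hx0, hx1⟩ := hx
    simp only []
    rw [Complex.ofReal_mul, Complex.ofReal_cpow hx0,
      Complex.ofReal_cpow (by linarith : (0:ℝ) ≤ 1 - x)]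
    push_cast
    ring
  have h2 := Complex.Gamma_mul_Gamma_eq_betaIntegral
      (s := (a:ℂ)) (t := (b:ℂ)) (by simpa using ha) (by simpa using hb)
  rw [h1, ← Complex.ofReal_add, Complex.Gamma_ofReal, Complex.Gamma_ofReal,
    Complex.Gamma_ofReal, ← Complex.ofReal_mul, ← Complex.ofReal_mul,
    Complex.ofReal_inj] at h2
  have hG : Real.Gamma (a + b) ≠ 0 :=
    ne_of_gt (Real.Gamma_pos_of_pos (by linarith))
  have : (∫ x in (0:ℝ)..1, x ^ (a-1) * (1-x) ^ (b-1)) = betaFn a b := by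
    unfold betaFn
    field_simp
    linarith [h2]
  rw [← this, intervalIntegral.integral_of_le (by norm_num : (0:ℝ) ≤ 1),
    integral_Ioc_eq_integral_Ioo]

lemma integral_gamma_factor {a b : ℝ} (ha : 0 < a) (hb : 0 < b) :
    ∫ γ in Set.Ioo (0:ℝ) 1, γ ^ (a-1) * (1-γ) ^ (b-1) * (1+γ) ^ (-(a+b))
      = 2 ^ (-a) * betaFn a b := by
  set f : ℝ → ℝ := fun t => t / (2 - t) with hf
  set f' : ℝ → ℝ := fun t => 2 / (2 - t) ^ 2 with hf'
  have hmem : ∀ t ∈ Set.Ioo (0:ℝ) 1, 0 < t ∧ t < 1 ∧ 0 < 1 - t ∧ 0 < 2 - t := by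
    rintro t ⟨h1, h2⟩; exact ⟨h1, h2, by linarith, by linarith⟩
  have hderiv : ∀ t ∈ Set.Ioo (0:ℝ) 1, HasDerivWithinAt f (f' t) (Set.Ioo 0 1) t := by
    intro t ht
    obtain ⟨_, _, _, h2t⟩ := hmem t ht
    have : HasDerivAt f ((1 * (2 - t) - t * (0 - 1)) / (2 - t) ^ 2) t :=
      (hasDerivAt_id t).div ((hasDerivAt_const t 2).sub (hasDerivAt_id t)) (by linarith)
    have h : (1 * (2 - t) - t * (0 - 1)) / (2 - t) ^ 2 = f' t := by
      rw [hf']; ring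
    exact (h ▸ this).hasDerivWithinAt
  have hinj : Set.InjOn f (Set.Ioo 0 1) := by
    intro s hs t ht hst
    obtain ⟨_, _, _, h2s⟩ := hmem s hs
    obtain ⟨_, _, _, h2t⟩ := hmem t ht
    rw [hf, div_eq_div_iff (by linarith) (by linarith)] at hst
    nlinarith
  have himg : f '' Set.Ioo 0 1 = Set.Ioo (0:ℝ) 1 := by
    ext y
    constructor
    · rintro ⟨t, ht, rfl⟩
      obtain ⟨ht0, ht1, h1t, h2t⟩ := hmem t ht
      constructor
      · exact div_pos ht0 h2t
      · rw [div_lt_one h2t]; linarith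
    · rintro ⟨hy0, hy1⟩
      refine ⟨2 * y / (1 + y), ⟨by positivity, ?_⟩, ?_⟩
      · rw [div_lt_one (by linarith)]; linarith
      · rw [hf]
        have h1y : (0:ℝ) < 1 + y := by linarith
        field_simp
        ring
  have key := integral_image_eq_integral_abs_deriv_smul measurableSet_Ioo hderiv hinj
    (fun γ => γ ^ (a-1) * (1-γ) ^ (b-1) * (1+γ) ^ (-(a+b)))
  rw [himg] at key
  rw [key]
  have hpt : ∀ t ∈ Set.Ioo (0:ℝ) 1,
      |f' t| • (f t ^ (a-1) * (1 - f t) ^ (b-1) * (1 + f t) ^ (-(a+b)))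
        = 2 ^ (-a) * (t ^ (a-1) * (1-t) ^ (b-1)) := by
    intro t ht
    obtain ⟨ht0, ht1, h1t, h2t⟩ := hmem t ht
    have e1 : 1 - f t = 2 * (1-t) / (2-t) := by rw [hf]; field_simp; ring
    have e2 : 1 + f t = 2 / (2-t) := by rw [hf]; field_simp; ring
    have e0 : |f' t| = 2 * ((2-t) ^ (-(2:ℝ))) := by
      rw [hf']
      show |2 / (2-t) ^ 2| = _
      rw [abs_of_pos (by positivity), Real.rpow_neg (by linarith), Real.rpow_two,
        div_eq_mul_inv]
    have d1 : f t ^ (a-1) = t ^ (a-1) * (2-t) ^ (-(a-1)) := by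
      rw [hf, Real.div_rpow (le_of_lt ht0) (by linarith),
        Real.rpow_neg (by linarith), div_eq_mul_inv]
    have d2 : (1 - f t) ^ (b-1) = 2 ^ (b-1) * (1-t) ^ (b-1) * (2-t) ^ (-(b-1)) := by
      rw [e1, Real.div_rpow (by positivity) (by linarith),
        Real.mul_rpow (by norm_num) (le_of_lt h1t),
        Real.rpow_neg (by linarith), div_eq_mul_inv]
    have d3 : (1 + f t) ^ (-(a+b)) = 2 ^ (-(a+b)) * (2-t) ^ (a+b) := by
      rw [e2, Real.div_rpow (by norm_num) (by linarith),
        Real.rpow_neg (by norm_num : (0:ℝ) ≤ 2), Real.rpow_neg (by linarith),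
        div_eq_mul_inv, inv_inv, ← Real.rpow_neg (by norm_num : (0:ℝ) ≤ 2)]
    have c2 : (2:ℝ) * (2 ^ (b-1) * 2 ^ (-(a+b))) = 2 ^ (-a) := by
      rw [show -a = 1 + (b-1) + -(a+b) by ring, Real.rpow_add (by norm_num),
        Real.rpow_add (by norm_num), Real.rpow_one]
      ring
    have c3 : (2-t) ^ (-(2:ℝ)) * ((2-t) ^ (-(a-1)) * ((2-t) ^ (-(b-1)) * (2-t) ^ (a+b))) = 1 := by
      rw [← Real.rpow_add (by linarith), ← Real.rpow_add (by linarith),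
        ← Real.rpow_add (by linarith)]
      rw [show -(2:ℝ) + (-(a-1) + (-(b-1) + (a+b))) = 0 by ring, Real.rpow_zero]
    rw [smul_eq_mul, e0, d1, d2, d3]
    calc 2 * (2-t) ^ (-(2:ℝ)) * (t ^ (a-1) * (2-t) ^ (-(a-1)) *
          (2 ^ (b-1) * (1-t) ^ (b-1) * (2-t) ^ (-(b-1))) * (2 ^ (-(a+b)) * (2-t) ^ (a+b)))
        = (2 * (2 ^ (b-1) * 2 ^ (-(a+b)))) *
            ((2-t) ^ (-(2:ℝ)) * ((2-t) ^ (-(a-1)) * ((2-t) ^ (-(b-1)) * (2-t) ^ (a+b)))) *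
            (t ^ (a-1) * (1-t) ^ (b-1)) := by ring
      _ = 2 ^ (-a) * (t ^ (a-1) * (1-t) ^ (b-1)) := by rw [c2, c3]; ring
  rw [setIntegral_congr_fun measurableSet_Ioo hpt, integral_const_mul, integral_beta ha hb]

lemma integral_G (m n : ℕ) :
    ∫ γ in Set.Ioo (0:ℝ) 1,
      γ ^ m * γ ^ (-(1:ℝ)/2) * ((1-γ) ^ n * (1-γ) ^ (-(1:ℝ)/2)) *
        ((1+γ) ^ (m+n) * (1+γ))⁻¹
      = 2 ^ (-((m:ℝ)+1/2)) * betaFn ((m:ℝ)+1/2) ((n:ℝ)+1/2) := by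
  have ha : (0:ℝ) < (m:ℝ) + 1/2 := by positivity
  have hb : (0:ℝ) < (n:ℝ) + 1/2 := by positivity
  rw [← integral_gamma_factor ha hb]
  apply setIntegral_congr_fun measurableSet_Ioo
  rintro γ ⟨h0, h1⟩
  have h1γ : (0:ℝ) < 1 - γ := by linarith
  have h2γ : (0:ℝ) < 1 + γ := by linarith
  simp only []
  rw [← Real.rpow_natCast γ m, ← Real.rpow_natCast (1-γ) n,
    ← Real.rpow_add h0, ← Real.rpow_add h1γ,
    ← pow_succ, ← Real.rpow_natCast (1+γ) (m+n+1),
    ← Real.rpow_neg (le_of_lt h2γ)]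
  push_cast
  rw [show (m:ℝ) + -(1:ℝ)/2 = (m:ℝ) + 1/2 - 1 by ring,
    show (n:ℝ) + -(1:ℝ)/2 = (n:ℝ) + 1/2 - 1 by ring,
    show -((m:ℝ) + (n:ℝ) + 1) = -(((m:ℝ)+1/2) + ((n:ℝ)+1/2)) by ring]

lemma integral_H (m k : ℕ) {a : ℝ} (ha : 0 < a) :
    ∫ u in Set.Ioo (0:ℝ) 1,
      u ^ m * u ^ (a-1) * ((1-u) ^ k * (1-u) ^ (-(1:ℝ)/2))
      = betaFn ((m:ℝ)+a) ((k:ℝ)+1/2) := by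
  have ha' : (0:ℝ) < (m:ℝ) + a := by positivity
  have hb : (0:ℝ) < (k:ℝ) + 1/2 := by positivity
  rw [← integral_beta ha' hb]
  apply setIntegral_congr_fun measurableSet_Ioo
  rintro u ⟨h0, h1⟩
  have h1u : (0:ℝ) < 1 - u := by linarith
  simp only []
  rw [← Real.rpow_natCast u m, ← Real.rpow_natCast (1-u) k,
    ← Real.rpow_add h0, ← Real.rpow_add h1u]
  rw [show (m:ℝ) + (a-1) = (m:ℝ) + a - 1 by ring,
    show (k:ℝ) + -(1:ℝ)/2 = (k:ℝ) + 1/2 - 1 by ring]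

/-- The marginal predictive distribution of the data under Dallal's saturated model
`H₁* : γ0 ≠ γ1` (up to multinomial coefficients): integrating the saturated-model
likelihood in the `(γ0,γ1,u,v)` parameterization against the prior
`π(γ0,γ1,u,v)` over `(0,1)⁴` yields
`[B(m10+1/2, m20+1/2)/B(1/2,1/2)]·[B(m11+1/2, m21+1/2)/B(1/2,1/2)]·
 [B(m10+m20+a0, m00+1/2)/B(a0,1/2)]·[B(m11+m21+a1, m01+1/2)/B(a1,1/2)]`. -/
theorem dallal_marginal_predictive_saturated_model
    (m00 m10 m20 m01 m11 m21 : ℕ) (a0 a1 : ℝ) (ha0 : 0 < a0) (ha1 : 0 < a1) :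
    ∫ γ0 in Set.Ioo (0 : ℝ) 1, ∫ γ1 in Set.Ioo (0 : ℝ) 1,
      ∫ u in Set.Ioo (0 : ℝ) 1, ∫ v in Set.Ioo (0 : ℝ) 1,
        (2 : ℝ) ^ (m10 + m11) *
          (γ0 ^ m10 * (1 - γ0) ^ m20 / (1 + γ0) ^ (m10 + m20)) *
          (γ1 ^ m11 * (1 - γ1) ^ m21 / (1 + γ1) ^ (m11 + m21)) *
          (u ^ (m10 + m20) * (1 - u) ^ m00) * (v ^ (m11 + m21) * (1 - v) ^ m01) *
        ((2 : ℝ) ^ ((1 : ℝ) / 2) * γ0 ^ (-(1 : ℝ) / 2) * (1 - γ0) ^ (-(1 : ℝ) / 2) /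
            (betaFn (1 / 2) (1 / 2) * (1 + γ0)) *
          ((2 : ℝ) ^ ((1 : ℝ) / 2) * γ1 ^ (-(1 : ℝ) / 2) * (1 - γ1) ^ (-(1 : ℝ) / 2) /
            (betaFn (1 / 2) (1 / 2) * (1 + γ1))) *
          (u ^ (a0 - 1) * (1 - u) ^ (-(1 : ℝ) / 2) / betaFn a0 (1 / 2)) *
          (v ^ (a1 - 1) * (1 - v) ^ (-(1 : ℝ) / 2) / betaFn a1 (1 / 2))) =
      betaFn ((m10 : ℝ) + 1 / 2) ((m20 : ℝ) + 1 / 2) / betaFn (1 / 2) (1 / 2) *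
        (betaFn ((m11 : ℝ) + 1 / 2) ((m21 : ℝ) + 1 / 2) / betaFn (1 / 2) (1 / 2)) *
        (betaFn ((m10 : ℝ) + m20 + a0) ((m00 : ℝ) + 1 / 2) / betaFn a0 (1 / 2)) *
        (betaFn ((m11 : ℝ) + m21 + a1) ((m01 : ℝ) + 1 / 2) / betaFn a1 (1 / 2)) := by
  have hB : (0:ℝ) < betaFn (1/2) (1/2) := betaFn_pos (by norm_num) (by norm_num)
  have hBa0 : (0:ℝ) < betaFn a0 (1/2) := betaFn_pos ha0 (by norm_num)
  have hBa1 : (0:ℝ) < betaFn a1 (1/2) := betaFn_pos ha1 (by norm_num)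
  set C : ℝ := (2:ℝ) ^ (m10 + m11) * ((2:ℝ) ^ ((1:ℝ)/2) * (2:ℝ) ^ ((1:ℝ)/2)) /
      (betaFn (1/2) (1/2) * betaFn (1/2) (1/2) * betaFn a0 (1/2) * betaFn a1 (1/2)) with hC
  have hinner : ∀ γ0 ∈ Set.Ioo (0:ℝ) 1, ∀ γ1 ∈ Set.Ioo (0:ℝ) 1,
      ∀ u ∈ Set.Ioo (0:ℝ) 1, ∀ v ∈ Set.Ioo (0:ℝ) 1,
      (2 : ℝ) ^ (m10 + m11) *
          (γ0 ^ m10 * (1 - γ0) ^ m20 / (1 + γ0) ^ (m10 + m20)) *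
          (γ1 ^ m11 * (1 - γ1) ^ m21 / (1 + γ1) ^ (m11 + m21)) *
          (u ^ (m10 + m20) * (1 - u) ^ m00) * (v ^ (m11 + m21) * (1 - v) ^ m01) *
        ((2 : ℝ) ^ ((1 : ℝ) / 2) * γ0 ^ (-(1 : ℝ) / 2) * (1 - γ0) ^ (-(1 : ℝ) / 2) /
            (betaFn (1 / 2) (1 / 2) * (1 + γ0)) *
          ((2 : ℝ) ^ ((1 : ℝ) / 2) * γ1 ^ (-(1 : ℝ) / 2) * (1 - γ1) ^ (-(1 : ℝ) / 2) /
            (betaFn (1 / 2) (1 / 2) * (1 + γ1))) *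
          (u ^ (a0 - 1) * (1 - u) ^ (-(1 : ℝ) / 2) / betaFn a0 (1 / 2)) *
          (v ^ (a1 - 1) * (1 - v) ^ (-(1 : ℝ) / 2) / betaFn a1 (1 / 2)))
      = (γ0 ^ m10 * γ0 ^ (-(1:ℝ)/2) * ((1-γ0) ^ m20 * (1-γ0) ^ (-(1:ℝ)/2)) *
            ((1+γ0) ^ (m10+m20) * (1+γ0))⁻¹) *
          ((γ1 ^ m11 * γ1 ^ (-(1:ℝ)/2) * ((1-γ1) ^ m21 * (1-γ1) ^ (-(1:ℝ)/2)) *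
            ((1+γ1) ^ (m11+m21) * (1+γ1))⁻¹) *
          ((u ^ (m10+m20) * u ^ (a0-1) * ((1-u) ^ m00 * (1-u) ^ (-(1:ℝ)/2))) *
          (C * (v ^ (m11+m21) * v ^ (a1-1) * ((1-v) ^ m01 * (1-v) ^ (-(1:ℝ)/2)))))) := by
    rintro γ0 ⟨hγ00, hγ01⟩ γ1 ⟨hγ10, hγ11⟩ u ⟨hu0, hu1⟩ v ⟨hv0, hv1⟩
    have h10 : (0:ℝ) < 1 + γ0 := by linarith
    have h11 : (0:ℝ) < 1 + γ1 := by linarith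
    have hp0 : ((1:ℝ)+γ0) ^ (m10+m20) ≠ 0 := by positivity
    have hp1 : ((1:ℝ)+γ1) ^ (m11+m21) ≠ 0 := by positivity
    rw [hC]
    field_simp
  have step : (∫ γ0 in Set.Ioo (0:ℝ) 1, ∫ γ1 in Set.Ioo (0:ℝ) 1,
      ∫ u in Set.Ioo (0:ℝ) 1, ∫ v in Set.Ioo (0:ℝ) 1,
      (γ0 ^ m10 * γ0 ^ (-(1:ℝ)/2) * ((1-γ0) ^ m20 * (1-γ0) ^ (-(1:ℝ)/2)) *
            ((1+γ0) ^ (m10+m20) * (1+γ0))⁻¹) *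
          ((γ1 ^ m11 * γ1 ^ (-(1:ℝ)/2) * ((1-γ1) ^ m21 * (1-γ1) ^ (-(1:ℝ)/2)) *
            ((1+γ1) ^ (m11+m21) * (1+γ1))⁻¹) *
          ((u ^ (m10+m20) * u ^ (a0-1) * ((1-u) ^ m00 * (1-u) ^ (-(1:ℝ)/2))) *
          (C * (v ^ (m11+m21) * v ^ (a1-1) * ((1-v) ^ m01 * (1-v) ^ (-(1:ℝ)/2)))))))
      = (2 ^ (-((m10:ℝ)+1/2)) * betaFn ((m10:ℝ)+1/2) ((m20:ℝ)+1/2)) *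
        ((2 ^ (-((m11:ℝ)+1/2)) * betaFn ((m11:ℝ)+1/2) ((m21:ℝ)+1/2)) *
        ((betaFn ((m10:ℝ)+m20+a0) ((m00:ℝ)+1/2)) *
        (C * betaFn ((m11:ℝ)+m21+a1) ((m01:ℝ)+1/2)))) := by
    have hJ1 : (∫ v in Set.Ioo (0:ℝ) 1,
        v ^ (m11+m21) * v ^ (a1-1) * ((1-v) ^ m01 * (1-v) ^ (-(1:ℝ)/2)))
        = betaFn ((m11:ℝ)+m21+a1) ((m01:ℝ)+1/2) := by
      rw [integral_H (m11+m21) m01 ha1]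
      congr 1
      push_cast; ring
    have hJ0 : (∫ u in Set.Ioo (0:ℝ) 1,
        u ^ (m10+m20) * u ^ (a0-1) * ((1-u) ^ m00 * (1-u) ^ (-(1:ℝ)/2)))
        = betaFn ((m10:ℝ)+m20+a0) ((m00:ℝ)+1/2) := by
      rw [integral_H (m10+m20) m00 ha0]
      congr 1
      push_cast; ring
    simp only [MeasureTheory.integral_const_mul, MeasureTheory.integral_mul_const]
    rw [integral_G m10 m20, integral_G m11 m21, hJ0, hJ1]
  rw [setIntegral_congr_fun measurableSet_Ioo (fun γ0 hγ0 =>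
      setIntegral_congr_fun measurableSet_Ioo (fun γ1 hγ1 =>
        setIntegral_congr_fun measurableSet_Ioo (fun u hu =>
          setIntegral_congr_fun measurableSet_Ioo (fun v hv =>
            hinner γ0 hγ0 γ1 hγ1 u hu v hv)))), step, hC]
  have key : ∀ m : ℕ, (2:ℝ) ^ ((1:ℝ)/2) * 2 ^ (-((m:ℝ)+1/2)) = ((2:ℝ) ^ m)⁻¹ := by
    intro m
    rw [← Real.rpow_add (by norm_num : (0:ℝ) < 2),
      show (1:ℝ)/2 + -((m:ℝ)+1/2) = -(m:ℝ) by ring,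
      Real.rpow_neg (by norm_num), Real.rpow_natCast]
  have h2m0 : ((2:ℝ) ^ m10) ≠ 0 := by positivity
  have h2m1 : ((2:ℝ) ^ m11) ≠ 0 := by positivity
  calc (2 ^ (-((m10:ℝ)+1/2)) * betaFn ((m10:ℝ)+1/2) ((m20:ℝ)+1/2)) *
        ((2 ^ (-((m11:ℝ)+1/2)) * betaFn ((m11:ℝ)+1/2) ((m21:ℝ)+1/2)) *
        ((betaFn ((m10:ℝ)+m20+a0) ((m00:ℝ)+1/2)) *
        ((2:ℝ) ^ (m10 + m11) * ((2:ℝ) ^ ((1:ℝ)/2) * (2:ℝ) ^ ((1:ℝ)/2)) /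
          (betaFn (1/2) (1/2) * betaFn (1/2) (1/2) * betaFn a0 (1/2) * betaFn a1 (1/2)) *
          betaFn ((m11:ℝ)+m21+a1) ((m01:ℝ)+1/2))))
      = ((2:ℝ) ^ (m10 + m11) *
          (((2:ℝ) ^ ((1:ℝ)/2) * 2 ^ (-((m10:ℝ)+1/2))) *
           ((2:ℝ) ^ ((1:ℝ)/2) * 2 ^ (-((m11:ℝ)+1/2))))) *
        (betaFn ((m10:ℝ)+1/2) ((m20:ℝ)+1/2) * betaFn ((m11:ℝ)+1/2) ((m21:ℝ)+1/2) *
          betaFn ((m10:ℝ)+m20+a0) ((m00:ℝ)+1/2) * betaFn ((m11:ℝ)+m21+a1) ((m01:ℝ)+1/2)) /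
        (betaFn (1/2) (1/2) * betaFn (1/2) (1/2) * betaFn a0 (1/2) * betaFn a1 (1/2)) := by
        ring
    _ = betaFn ((m10 : ℝ) + 1 / 2) ((m20 : ℝ) + 1 / 2) / betaFn (1 / 2) (1 / 2) *
        (betaFn ((m11 : ℝ) + 1 / 2) ((m21 : ℝ) + 1 / 2) / betaFn (1 / 2) (1 / 2)) *
        (betaFn ((m10 : ℝ) + m20 + a0) ((m00 : ℝ) + 1 / 2) / betaFn a0 (1 / 2)) *
        (betaFn ((m11 : ℝ) + m21 + a1) ((m01 : ℝ) + 1 / 2) / betaFn a1 (1 / 2)) := by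
        rw [key m10, key m11, pow_add]
        field_simp
        try ring
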